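/- arXiv:1608.07708 — 2 statements merged into one kernel-verified Lean document; each statement's English description precedes it below -/
import Mathlib

section
/- The map sending a lax transformation α from K to H to the transformation K ⟶ R H with component at c given by x ↦ (fun d f => α_d ((K.map f) x)) is well defined (its values satisfy the defining inequality of (R H)(c), and its components are monotone and strictly natural), and it is a bijection between lax transformations from K to H and natural transformations K ⟶ R H in [C, PartOrd]. Hence R is right adjoint to the inclusion of [C, PartOrd] into the category of functors and lax transformations. -/
open CategoryTheory

/-- Application of a morphism of `PartOrd` (a bundled monotone map). -/
abbrev pApp {X Y : PartOrd} (f : X ⟶ Y) : X → Y := (show X →o Y from f.hom)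

variable {C : Type} [SmallCategory C]

/-- The carrier of `(R H)(c)`: families `φ d : (c ⟶ d) → H.obj d` satisfying
`φ d' (f ≫ g) ≤ H.map g (φ d f)`, ordered pointwise. -/
abbrev RCarrier (H : C ⥤ PartOrd) (c : C) : Type :=
  {φ : ∀ d : C, (c ⟶ d) → H.obj d //
    ∀ (d d' : C) (f : c ⟶ d) (g : d ⟶ d'), φ d' (f ≫ g) ≤ pApp (H.map g) (φ d f)}

/-- The action of `R H` on morphisms. -/
def RMap (H : C ⥤ PartOrd) {c c' : C} (h : c ⟶ c') (φ : RCarrier H c) : RCarrier H c' :=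
  ⟨fun d (f : c' ⟶ d) => φ.1 d (h ≫ f), by
    intro d d' f g
    simpa [Category.assoc] using φ.2 d d' (h ≫ f) g⟩

/-- The functor `R H : C ⥤ PartOrd`. -/
def RFunctor (H : C ⥤ PartOrd) : C ⥤ PartOrd where
  obj c := PartOrd.of (RCarrier H c)
  map {c c'} h := PartOrd.ofHom (⟨RMap H h, by
    intro φ ψ hle
    exact fun d f => hle d (h ≫ f)⟩ : RCarrier H c →o RCarrier H c')
  map_id := by
    intro c
    apply PartOrd.hom_ext
    apply OrderHom.ext
    funext φ
    apply Subtype.ext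
    funext d f
    show φ.1 d (𝟙 c ≫ f) = φ.1 d f
    rw [Category.id_comp]
  map_comp := by
    intro c c' c'' h h'
    apply PartOrd.hom_ext
    apply OrderHom.ext
    funext φ
    apply Subtype.ext
    funext d f
    show φ.1 d ((h ≫ h') ≫ f) = φ.1 d (h ≫ (h' ≫ f))
    rw [Category.assoc]

/-- A lax transformation from `K` to `H`: monotone components with
`α_{c'} ∘ K.map g ≤ H.map g ∘ α_c` for every `g : c ⟶ c'`. -/
structure LaxTrans (K H : C ⥤ PartOrd) where
  app : ∀ c : C, (K.obj c : Type) →o (H.obj c : Type)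
  lax : ∀ {c c' : C} (g : c ⟶ c') (x : K.obj c),
    app c' (pApp (K.map g) x) ≤ pApp (H.map g) (app c x)

/-- Saturation: the natural transformation `K ⟶ R H` induced by a lax transformation,
with component at `c` given by `x ↦ (fun d f => α_d (K.map f x))`. -/
def saturateLax (K H : C ⥤ PartOrd) (α : LaxTrans K H) : K ⟶ RFunctor H where
  app c := PartOrd.ofHom (⟨fun x : K.obj c =>
      (⟨fun d (f : c ⟶ d) => α.app d (pApp (K.map f) x), by
        intro d d' f g
        show α.app d' (pApp (K.map (f ≫ g)) x) ≤ pApp (H.map g) (α.app d (pApp (K.map f) x))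
        rw [K.map_comp]
        exact (α.lax g (pApp (K.map f) x) :)⟩ : RCarrier H c),
      by
        intro x y hxy
        exact fun d f => (α.app d).monotone ((show _ →o _ from (K.map f).hom).monotone hxy)⟩ :
      (K.obj c : Type) →o RCarrier H c)
  naturality := by
    intro c c' h
    apply PartOrd.hom_ext
    apply OrderHom.ext
    funext x
    apply Subtype.ext
    funext d f
    show α.app d (pApp (K.map f) (pApp (K.map h) x)) = α.app d (pApp (K.map (h ≫ f)) x)
    rw [K.map_comp]
    rfl

/-- saturation is well defined (its values satisfy the defining inequality
of `R H`, monotonicity and strict naturality being witnessed by `saturateLax`), and it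
is a bijection between lax transformations from `K` to `H` and natural transformations
`K ⟶ R H`; hence `R` is right adjoint to the inclusion of `[C, PartOrd]` into the
category of functors and lax transformations. -/
theorem saturateLax_bijective (K H : C ⥤ PartOrd) :
    (∀ (α : LaxTrans K H) (c : C) (x : K.obj c) (d d' : C) (f : c ⟶ d) (g : d ⟶ d'),
      α.app d' (pApp (K.map (f ≫ g)) x) ≤ pApp (H.map g) (α.app d (pApp (K.map f) x))) ∧
    Function.Bijective (saturateLax K H) := by
  constructor
  · intro α c x d d' f g
    rw [K.map_comp]
    exact (α.lax g (pApp (K.map f) x) :)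
  constructor
  · intro α α' hαα'
    have happ : ∀ (c : C) (x : K.obj c), α.app c x = α'.app c x := by
      intro c x
      have h1 : (saturateLax K H α).app c = (saturateLax K H α').app c := by rw [hαα']
      have h2 : α.app c (pApp (K.map (𝟙 c)) x) = α'.app c (pApp (K.map (𝟙 c)) x) :=
        congrArg (fun γ : K.obj c ⟶ (RFunctor H).obj c => (pApp γ x).1 c (𝟙 c)) h1
      rw [K.map_id] at h2
      exact h2
    cases α; cases α'
    simp only [LaxTrans.mk.injEq]
    funext c
    exact OrderHom.ext _ _ (funext (happ c))
  · intro β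
    refine ⟨⟨fun c => ⟨fun x => (pApp (β.app c) x).1 c (𝟙 c), ?_⟩, ?_⟩, ?_⟩
    · intro x y hxy
      exact (show (K.obj c : Type) →o _ from (β.app c).hom).monotone hxy c (𝟙 c)
    · intro c c' g x
      show (pApp (β.app c') (pApp (K.map g) x)).1 c' (𝟙 c') ≤
        pApp (H.map g) ((pApp (β.app c) x).1 c (𝟙 c))
      have h2 : (pApp (β.app c') (pApp (K.map g) x)).1 c' (𝟙 c')
          = (pApp (β.app c) x).1 c' (g ≫ 𝟙 c') :=
        congrArg (fun γ : K.obj c ⟶ (RFunctor H).obj c' => (pApp γ x).1 c' (𝟙 c'))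
          (β.naturality g)
      rw [h2, Category.comp_id]
      simpa using (pApp (β.app c) x).2 c c' (𝟙 c) g
    · ext c x
      apply Subtype.ext
      funext d f
      show (pApp (β.app d) (pApp (K.map f) x)).1 d (𝟙 d) = (pApp (β.app c) x).1 d f
      have h3 : (pApp (β.app d) (pApp (K.map f) x)).1 d (𝟙 d)
          = (pApp (β.app c) x).1 d (f ≫ 𝟙 d) :=
        congrArg (fun γ : K.obj c ⟶ (RFunctor H).obj d => (pApp γ x).1 d (𝟙 d))
          (β.naturality f)
      rw [h3, Category.comp_id]
end

section
/- R_W H is a subfunctor of R H (the action of R H on morphisms preserves the W-strictness condition defining R_W H), and the assignment sending α to the transformation with component at c given by x ↦ (fun d f => α_d ((K.map f) x)) is a bijection between lax transformations from K to H that are strict on W and natural transformations K ⟶ R_W H in [C, PartOrd]. -/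
open CategoryTheory

variable {C : Type} [SmallCategory C]

/-- The carrier of `(R_W H)(c)`: elements of `(R H)(c)` that are strict along the class
`W` of morphisms. -/
abbrev RWCarrier (H : C ⥤ PartOrd) (W : ∀ ⦃c c' : C⦄, (c ⟶ c') → Prop) (c : C) : Type :=
  {φ : RCarrier H c // ∀ (d d' : C) (f : c ⟶ d) (g : d ⟶ d'), W g →
    φ.1 d' (f ≫ g) = pApp (H.map g) (φ.1 d f)}

/-- The subfunctor `R_W H : C ⥤ PartOrd` of `R H`, with the same action on morphisms. -/
def RWFunctor (H : C ⥤ PartOrd) (W : ∀ ⦃c c' : C⦄, (c ⟶ c') → Prop) : C ⥤ PartOrd where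
  obj c := PartOrd.of (RWCarrier H W c)
  map {c c'} h := PartOrd.ofHom (⟨fun ψ => ⟨RMap H h ψ.1, by
      intro d d' f g hg
      show ψ.1.1 d' (h ≫ (f ≫ g)) = pApp (H.map g) (ψ.1.1 d (h ≫ f))
      rw [← Category.assoc]
      exact ψ.2 d d' (h ≫ f) g hg⟩, by
    intro ψ ψ' hle
    exact fun d f => hle d (h ≫ f)⟩ : RWCarrier H W c →o RWCarrier H W c')
  map_id := by
    intro c
    apply PartOrd.Hom.ext
    apply OrderHom.ext
    funext ψ
    apply Subtype.ext
    apply Subtype.ext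
    funext d f
    show ψ.1.1 d (𝟙 c ≫ f) = ψ.1.1 d f
    rw [Category.id_comp]
  map_comp := by
    intro c c' c'' h h'
    apply PartOrd.Hom.ext
    apply OrderHom.ext
    funext ψ
    apply Subtype.ext
    apply Subtype.ext
    funext d f
    show ψ.1.1 d ((h ≫ h') ≫ f) = ψ.1.1 d (h ≫ (h' ≫ f))
    rw [Category.assoc]

/-- The property of a lax transformation being strict on a class `W` of morphisms. -/
def LaxTrans.StrictOn {K H : C ⥤ PartOrd} (α : LaxTrans K H)
    (W : ∀ ⦃c c' : C⦄, (c ⟶ c') → Prop) : Prop :=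
  ∀ (c c' : C) (g : c ⟶ c'), W g → ∀ x : K.obj c,
    α.app c' (pApp (K.map g) x) = pApp (H.map g) (α.app c x)

/-- Saturation of a `W`-strict lax transformation, landing in `R_W H`. -/
def saturateLaxW (K H : C ⥤ PartOrd) (W : ∀ ⦃c c' : C⦄, (c ⟶ c') → Prop)
    (α : {α : LaxTrans K H // α.StrictOn W}) : K ⟶ RWFunctor H W where
  app c := PartOrd.ofHom (⟨fun x : K.obj c =>
      (⟨⟨fun d (f : c ⟶ d) => α.1.app d (pApp (K.map f) x), by
        intro d d' f g
        show α.1.app d' (pApp (K.map (f ≫ g)) x) ≤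
          pApp (H.map g) (α.1.app d (pApp (K.map f) x))
        rw [K.map_comp]
        exact α.1.lax g (pApp (K.map f) x)⟩, by
        intro d d' f g hg
        show α.1.app d' (pApp (K.map (f ≫ g)) x) =
          pApp (H.map g) (α.1.app d (pApp (K.map f) x))
        rw [K.map_comp]
        exact α.2 d d' g hg (pApp (K.map f) x)⟩ : RWCarrier H W c),
      by
        intro x y hxy
        exact fun d f => (α.1.app d).monotone ((show _ →o _ from (K.map f).hom).monotone hxy)⟩ :
      (K.obj c : Type) →o RWCarrier H W c)
  naturality := by
    intro c c' h
    apply PartOrd.Hom.ext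
    apply OrderHom.ext
    funext x
    apply Subtype.ext
    apply Subtype.ext
    funext d f
    show α.1.app d (pApp (K.map f) (pApp (K.map h) x)) = α.1.app d (pApp (K.map (h ≫ f)) x)
    rw [K.map_comp]
    rfl

/-- for a class `W` of morphisms containing all identities and closed
under composition, `R_W H` is a subfunctor of `R H` (the action of `R H` preserves
`W`-strictness), and saturation is a bijection between lax transformations `K` to `H`
that are strict on `W` and natural transformations `K ⟶ R_W H`. -/
theorem saturateLaxW_bijective (K H : C ⥤ PartOrd)
    (W : ∀ ⦃c c' : C⦄, (c ⟶ c') → Prop)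
    (hid : ∀ c : C, W (𝟙 c))
    (hcomp : ∀ ⦃c c' c'' : C⦄ (g : c ⟶ c') (g' : c' ⟶ c''), W g → W g' → W (g ≫ g')) :
    (∀ (c c' : C) (h : c ⟶ c') (ψ : RWCarrier H W c) (d d' : C) (f : c' ⟶ d)
      (g : d ⟶ d'), W g →
      (RMap H h ψ.1).1 d' (f ≫ g) = pApp (H.map g) ((RMap H h ψ.1).1 d f)) ∧
    Function.Bijective (saturateLaxW K H W) := by

  constructor
  · intro c c' h ψ d d' f g hg
    show ψ.1.1 d' (h ≫ (f ≫ g)) = pApp (H.map g) (ψ.1.1 d (h ≫ f))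
    rw [← Category.assoc]
    exact ψ.2 d d' (h ≫ f) g hg
  constructor
  · intro α α' hαα
    apply Subtype.ext
    cases' α with α hα; cases' α' with α' hα'
    cases' α with a la; cases' α' with a' la'
    simp only at *
    congr 1
    funext c
    apply OrderHom.ext
    funext x
    have := congrArg (fun β => ((pApp (β.app c) x : RWCarrier H W c)).1.1 c (𝟙 c)) hαα
    simp only [saturateLaxW] at this
    change a c (pApp (K.map (𝟙 c)) x) = a' c (pApp (K.map (𝟙 c)) x) at this
    rw [K.map_id] at this
    exact this
  · intro β
    have natur : ∀ {c c' : C} (h : c ⟶ c') (x : K.obj c) (d : C) (f : c' ⟶ d),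
        (pApp (β.app c') (pApp (K.map h) x) : RWCarrier H W c').1.1 d f
          = (pApp (β.app c) x : RWCarrier H W c).1.1 d (h ≫ f) := by
      intro c c' h x d f
      have := congrFun (congrArg (fun (f : K.obj c ⟶ (RWFunctor H W).obj c') =>
        (pApp f : K.obj c → RWCarrier H W c')) (β.naturality h)) x
      exact congrFun (congrFun (congrArg (fun ψ => ψ.1.1) this) d) f
    refine ⟨⟨⟨fun c => ⟨fun x => (pApp (β.app c) x : RWCarrier H W c).1.1 c (𝟙 c),
        ?_⟩, ?_⟩, ?_⟩, ?_⟩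
    · intro x y hxy
      exact ((β.app c).hom.monotone hxy) c (𝟙 c)
    · intro c c' g x
      show (pApp (β.app c') (pApp (K.map g) x) : RWCarrier H W c').1.1 c' (𝟙 c') ≤ _
      rw [natur g x c' (𝟙 c')]
      calc (pApp (β.app c) x : RWCarrier H W c).1.1 c' (g ≫ 𝟙 c')
          = (pApp (β.app c) x : RWCarrier H W c).1.1 c' (𝟙 c ≫ g) := by
            rw [Category.comp_id, Category.id_comp]
        _ ≤ _ := (pApp (β.app c) x : RWCarrier H W c).1.2 c c' (𝟙 c) g
    · intro c c' g hg x
      show (pApp (β.app c') (pApp (K.map g) x) : RWCarrier H W c').1.1 c' (𝟙 c') = _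
      rw [natur g x c' (𝟙 c'), Category.comp_id]
      have := (pApp (β.app c) x : RWCarrier H W c).2 c c' (𝟙 c) g hg
      rw [Category.id_comp] at this
      exact this
    · apply NatTrans.ext
      funext c
      apply PartOrd.Hom.ext
      apply OrderHom.ext
      funext x
      apply Subtype.ext
      apply Subtype.ext
      funext d f
      show (pApp (β.app d) (pApp (K.map f) x) : RWCarrier H W d).1.1 d (𝟙 d)
        = (pApp (β.app c) x : RWCarrier H W c).1.1 d f
      rw [natur f x d (𝟙 d), Category.comp_id]
end
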